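/- Let T be a measure preserving transformation of a σ-finite measure space (X, F, m), and A ∈ F recurrent for T with m(A) > 0. Let ν be a σ-finite T_A-invariant measure on (A, F ∩ A) with ν absolutely continuous with respect to m|_A. Then the measure ν̄ defined by ν̄(B) := ∫_A [∑_{k=0}^{τ_A(x)-1} 1(Tᵏx ∈ B)] ν(dx), B ∈ F, is T-invariant and satisfies ν̄|_A = ν. -/

import Mathlib

open MeasureTheory Set
open scoped ENNReal

/-- First return time to `A` under `T` (`0` if the orbit never returns). -/
noncomputable def retTime {X : Type*} (T : X → X) (A : Set X) (x : X) : ℕ :=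
  sInf {n | 1 ≤ n ∧ T^[n] x ∈ A}

/-- The induced (first-return) map of `T` on `A`. -/
noncomputable def indMap {X : Type*} (T : X → X) (A : Set X) (x : X) : X :=
  T^[retTime T A x] x

/-- The lift of a measure `ν` on `A` to the whole space over the return-time tower:
`B ↦ ∫_A ∑_{k=0}^{τ_A(x)-1} 1_B(Tᵏ x) ν(dx)`. -/
noncomputable def liftFn {X : Type*} [MeasurableSpace X] (T : X → X) (A : Set X)
    (ν : Measure X) (B : Set X) : ℝ≥0∞ :=
  ∫⁻ x in A, ∑ k ∈ Finset.range (retTime T A x), Set.indicator B (1 : X → ℝ≥0∞) (T^[k] x) ∂ν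

/-- Kac-type lifting: if `T` preserves the σ-finite measure `m`, `A` is recurrent for `T`
with `m A > 0`, and `ν` is a σ-finite `T_A`-invariant measure on `A` absolutely continuous
with respect to `m|_A`, then the lifted set function `ν̄` is `T`-invariant and restricts to
`ν` on `A`. -/
theorem stmt5 {X : Type*} [MeasurableSpace X] (m : Measure X) [SigmaFinite m] (T : X → X)
    (hT : MeasurePreserving T m m) (A : Set X) (hA : MeasurableSet A) (hpos : 0 < m A)
    (hrec : m (A ∩ {x | ∀ n, 1 ≤ n → T^[n] x ∉ A}) = 0)
    (ν : Measure X) [SigmaFinite ν] (hνA : ν Aᶜ = 0) (hac : ν ≪ m.restrict A)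
    (hνinv : MeasurePreserving (indMap T A) ν ν) :
    (∀ B : Set X, MeasurableSet B → liftFn T A ν (T ⁻¹' B) = liftFn T A ν B) ∧
      (∀ B : Set X, MeasurableSet B → B ⊆ A → liftFn T A ν B = ν B) := by
  have hIm : Measurable (indMap T A) := hνinv.measurable
  -- ν gives full measure to A
  have hcut : ∀ s : Set X, ν (s ∩ A) = ν s := by
    intro s
    have h0 : ν (s \ A) = 0 := measure_mono_null (fun x hx => hx.2) hνA
    rw [← measure_inter_add_diff s hA, h0, add_zero]
  -- integral of an indicator over A
  have hind : ∀ B : Set X, MeasurableSet B →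
      ∫⁻ x in A, B.indicator (1 : X → ℝ≥0∞) x ∂ν = ν B := by
    intro B hB
    rw [lintegral_indicator hB]
    simp only [Pi.one_apply]
    rw [setLIntegral_one, Measure.restrict_apply hB, hcut]
  -- a.e. every point returns to A
  have hret : ∀ᵐ x ∂ν, 1 ≤ retTime T A x := by
    have hN : ν {x | ∀ n, 1 ≤ n → T^[n] x ∉ A} = 0 := by
      set N := {x | ∀ n, 1 ≤ n → T^[n] x ∉ A}
      have hm : m.restrict A (N ∩ A) = 0 := by
        rw [Measure.restrict_apply' hA, inter_assoc, inter_self, inter_comm]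
        exact hrec
      rw [← hcut N]
      exact hac hm
    rw [ae_iff]
    refine (measure_mono_null ?_ hN)
    intro x hx
    intro n hn hnA
    have hne : {n | 1 ≤ n ∧ T^[n] x ∈ A}.Nonempty := ⟨n, hn, hnA⟩
    have h1 : 1 ≤ retTime T A x := (Nat.sInf_mem hne).1
    exact hx h1
  -- measurability of indicator compositions
  have hmeas1 : ∀ B : Set X, MeasurableSet B → Measurable (B.indicator (1 : X → ℝ≥0∞)) :=
    fun B hB => measurable_const.indicator hB
  constructor
  · -- T-invariance
    intro B hB
    -- pointwise identity
    have hpt : ∀ x : X,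
        (∑ k ∈ Finset.range (retTime T A x),
            (T ⁻¹' B).indicator (1 : X → ℝ≥0∞) (T^[k] x)) + B.indicator 1 x
        = (∑ k ∈ Finset.range (retTime T A x),
            B.indicator (1 : X → ℝ≥0∞) (T^[k] x)) + B.indicator 1 (indMap T A x) := by
      intro x
      set n := retTime T A x with hn
      have hterm : ∀ k, (T ⁻¹' B).indicator (1 : X → ℝ≥0∞) (T^[k] x)
          = B.indicator (1 : X → ℝ≥0∞) (T^[k + 1] x) := by
        intro k
        rw [Function.iterate_succ_apply']
        rfl
      calc (∑ k ∈ Finset.range n, (T ⁻¹' B).indicator (1 : X → ℝ≥0∞) (T^[k] x))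
            + B.indicator 1 x
          = (∑ k ∈ Finset.range n,
              B.indicator (1 : X → ℝ≥0∞) (T^[k + 1] x)) + B.indicator 1 (T^[0] x) := by
            simp [hterm]
        _ = ∑ k ∈ Finset.range (n + 1), B.indicator (1 : X → ℝ≥0∞) (T^[k] x) :=
            (Finset.sum_range_succ' (fun k => B.indicator (1 : X → ℝ≥0∞) (T^[k] x)) n).symm
        _ = (∑ k ∈ Finset.range n, B.indicator (1 : X → ℝ≥0∞) (T^[k] x))
            + B.indicator 1 (T^[n] x) := Finset.sum_range_succ _ n
        _ = _ := rfl
    -- the composed indicator is an indicator of a preimage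
    have hcomp : (fun x => B.indicator (1 : X → ℝ≥0∞) (indMap T A x))
        = (indMap T A ⁻¹' B).indicator (1 : X → ℝ≥0∞) := by
      funext x
      rfl
    have hν2 : ∫⁻ x in A, B.indicator (1 : X → ℝ≥0∞) (indMap T A x) ∂ν = ν B := by
      rw [hcomp, hind _ (hIm hB), hνinv.measure_preimage hB.nullMeasurableSet]
    -- integrate the pointwise identity
    have key : liftFn T A ν (T ⁻¹' B) + ν B = liftFn T A ν B + ν B := by
      have hL : ∫⁻ x in A, ((∑ k ∈ Finset.range (retTime T A x),
            (T ⁻¹' B).indicator (1 : X → ℝ≥0∞) (T^[k] x)) + B.indicator 1 x) ∂ν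
          = liftFn T A ν (T ⁻¹' B) + ν B := by
        rw [lintegral_add_right _ (hmeas1 B hB), hind B hB]; rfl
      have hR : ∫⁻ x in A, ((∑ k ∈ Finset.range (retTime T A x),
            B.indicator (1 : X → ℝ≥0∞) (T^[k] x)) + B.indicator 1 (indMap T A x)) ∂ν
          = liftFn T A ν B + ν B := by
        have hg : Measurable fun x => B.indicator (1 : X → ℝ≥0∞) (indMap T A x) :=
          (hmeas1 B hB).comp hIm
        rw [lintegral_add_right _ hg, hν2]; rfl
      rw [← hL, ← hR]
      exact lintegral_congr_ae (Filter.Eventually.of_forall fun x => hpt x)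
    by_cases hfin : ν B = ∞
    · -- both sides are infinite
      have h1 : liftFn T A ν B = ∞ := by
        refine top_le_iff.mp ?_
        rw [← hfin, ← hind B hB]
        refine lintegral_mono_ae (ae_restrict_of_ae ?_)
        filter_upwards [hret] with x hx
        exact Finset.single_le_sum (f := fun k => B.indicator (1 : X → ℝ≥0∞) (T^[k] x))
          (fun k _ => zero_le) (Finset.mem_range.mpr hx)
      have h2 : liftFn T A ν (T ⁻¹' B) = ∞ := by
        refine top_le_iff.mp ?_
        rw [← hfin, ← hν2]
        refine lintegral_mono_ae (ae_restrict_of_ae ?_)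
        filter_upwards [hret] with x hx
        set n := retTime T A x with hn
        have hmem : n - 1 ∈ Finset.range n := Finset.mem_range.mpr (Nat.sub_lt hx Nat.one_pos)
        have hterm : (T ⁻¹' B).indicator (1 : X → ℝ≥0∞) (T^[n - 1] x)
            = B.indicator (1 : X → ℝ≥0∞) (indMap T A x) := by
          have hEq : indMap T A x = T^[n] x := rfl
          have hstep : T (T^[n - 1] x) = T^[n] x := by
            have h' : n = n - 1 + 1 := by omega
            conv_rhs => rw [h']
            rw [Function.iterate_succ_apply']
          rw [hEq, ← hstep]
          rfl
        calc B.indicator (1 : X → ℝ≥0∞) (indMap T A x)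
            = (T ⁻¹' B).indicator (1 : X → ℝ≥0∞) (T^[n - 1] x) := hterm.symm
          _ ≤ _ := Finset.single_le_sum
              (f := fun k => (T ⁻¹' B).indicator (1 : X → ℝ≥0∞) (T^[k] x))
              (fun k _ => zero_le) hmem
      rw [h1, h2]
    · -- cancel the finite term
      rw [add_comm (liftFn T A ν (T ⁻¹' B)) (ν B), add_comm (liftFn T A ν B) (ν B)] at key
      exact (ENNReal.add_right_inj hfin).mp key
  · -- restriction to A
    intro B hB hBA
    have hae : ∀ᵐ x ∂ν, (∑ k ∈ Finset.range (retTime T A x),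
        B.indicator (1 : X → ℝ≥0∞) (T^[k] x)) = B.indicator 1 x := by
      filter_upwards [hret] with x hx
      rw [Finset.sum_eq_single_of_mem 0 (Finset.mem_range.mpr (by omega))
        (fun k hk hk0 => ?_)]
      · simp
      · have hklt : k < retTime T A x := Finset.mem_range.mp hk
        have hknot : k ∉ {n | 1 ≤ n ∧ T^[n] x ∈ A} := Nat.notMem_of_lt_sInf hklt
        have hkA : T^[k] x ∉ A := fun h => hknot ⟨by omega, h⟩
        exact Set.indicator_of_notMem (fun h => hkA (hBA h)) _
    calc liftFn T A ν B = ∫⁻ x in A, B.indicator (1 : X → ℝ≥0∞) x ∂ν :=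
          lintegral_congr_ae (ae_restrict_of_ae hae)
      _ = ν B := hind B hB
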